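/- Let K ≥ 4 be an integer, β = 1/(1+K²), c₀ = 1 − β, and let u₂₀₀(x) = −1/(2c₀) − cos(2x)/(2(c₀ − 4 + 16β)), u₁₁₀(x) = −cos((K−1)x)/(c₀ − (K−1)² + β(K−1)⁴) − cos((K+1)x)/(c₀ − (K+1)² + β(K+1)⁴), u₀₂₀(x) = −1/(2c₀) − cos(2Kx)/(2(c₀ − 4K² + 16βK⁴)). Then for all a, b ∈ ℝ: (1/π)∫_{−π}^{π} 2(a·cos(x) + b·cos(Kx))·(a²·u₂₀₀(x) + ab·u₁₁₀(x) + b²·u₀₂₀(x))·cos(x) dx = v₃₀₀(K)·a³ + v₁₂₀(K)·ab², and (1/π)∫_{−π}^{π} 2(a·cos(x) + b·cos(Kx))·(a²·u₂₀₀(x) + ab·u₁₁₀(x) + b²·u₀₂₀(x))·cos(Kx) dx = w₂₁₀(K)·a²b + w₀₃₀(K)·b³, where v₃₀₀(K) = −(K²+1)(5K²−24)/(6K²(K²−4)), v₁₂₀(K) = w₂₁₀(K) = −(K²+1)(4K⁴−27K²+4)/(K²(K²−4)(4K²−1)), and w₀₃₀(K) = −(K²+1)(24K²−5)/(6K²(4K²−1)).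 -/

import Mathlib

open Real intervalIntegral

lemma cosnx_int (n : ℝ) (m : ℤ) (h : n = (m : ℝ)) (hm : m ≠ 0) :
    (∫ x in (-π)..π, Real.cos (n * x)) = 0 := by
  subst h
  have hm' : (m : ℝ) ≠ 0 := Int.cast_ne_zero.mpr hm
  rw [integral_comp_mul_left (f := Real.cos) hm', integral_cos]
  have h1 : Real.sin ((m : ℝ) * π) = 0 := Real.sin_int_mul_pi m
  rw [mul_neg, Real.sin_neg, h1]
  simp

lemma cosnx_zero (n : ℝ) (h : n = 0) : (∫ x in (-π)..π, Real.cos (n * x)) = 2 * π := by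
  subst h
  simp [two_mul]

lemma J2 (p q v1 v2 : ℝ)
    (h1 : (∫ x in (-π)..π, Real.cos ((p + q) * x)) = v1)
    (h2 : (∫ x in (-π)..π, Real.cos ((p - q) * x)) = v2) :
    (∫ x in (-π)..π, Real.cos (p * x) * Real.cos (q * x)) = (v1 + v2) / 2 := by
  have e : Set.EqOn (fun x => Real.cos (p * x) * Real.cos (q * x))
      (fun x => (Real.cos ((p + q) * x) + Real.cos ((p - q) * x)) / 2) (Set.uIcc (-π) π) := by
    intro x _
    simp only [add_mul, sub_mul, Real.cos_add, Real.cos_sub]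
    ring
  rw [integral_congr e]
  rw [integral_div, integral_add, h1, h2]
  · exact (Real.continuous_cos.comp (continuous_const.mul continuous_id)).intervalIntegrable _ _
  · exact (Real.continuous_cos.comp (continuous_const.mul continuous_id)).intervalIntegrable _ _

lemma J3 (p q r v1 v2 v3 v4 : ℝ)
    (h1 : (∫ x in (-π)..π, Real.cos ((p + q + r) * x)) = v1)
    (h2 : (∫ x in (-π)..π, Real.cos ((p + q - r) * x)) = v2)
    (h3 : (∫ x in (-π)..π, Real.cos ((p - q + r) * x)) = v3)
    (h4 : (∫ x in (-π)..π, Real.cos ((p - q - r) * x)) = v4) :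
    (∫ x in (-π)..π, Real.cos (p * x) * Real.cos (q * x) * Real.cos (r * x))
      = (v1 + v2 + v3 + v4) / 4 := by
  have e : Set.EqOn (fun x => Real.cos (p * x) * Real.cos (q * x) * Real.cos (r * x))
      (fun x => (Real.cos ((p + q + r) * x) + Real.cos ((p + q - r) * x)
        + Real.cos ((p - q + r) * x) + Real.cos ((p - q - r) * x)) / 4) (Set.uIcc (-π) π) := by
    intro x _
    simp only [add_mul, sub_mul, Real.cos_add, Real.cos_sub, Real.sin_add, Real.sin_sub]
    ring
  have ic : ∀ c : ℝ, IntervalIntegrable (fun x => Real.cos (c * x)) MeasureTheory.volume (-π) π :=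
    fun c => (Real.continuous_cos.comp (continuous_const.mul continuous_id)).intervalIntegrable _ _
  rw [integral_congr e, integral_div,
    integral_add ((((ic _).add (ic _)).add (ic _))) (ic _),
    integral_add ((ic _).add (ic _)) (ic _),
    integral_add (ic _) (ic _), h1, h2, h3, h4]

set_option maxHeartbeats 2000000 in
/-- The cubic terms of the Lyapunov–Schmidt bifurcation equation for the Kawahara Wilton
ripples with K ≥ 4 (β = 1/(1+K²), c₀ = 1 − β). -/
theorem kawahara_cubic_terms_K_ge_4 (K : ℕ) (hK : 4 ≤ K) (β c₀ : ℝ)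
    (hβ : β = 1 / (1 + (K : ℝ) ^ 2)) (hc₀ : c₀ = 1 - β)
    (u200 u110 u020 : ℝ → ℝ)
    (hu200 : ∀ x : ℝ, u200 x =
      -1 / (2 * c₀) - Real.cos (2 * x) / (2 * (c₀ - 4 + 16 * β)))
    (hu110 : ∀ x : ℝ, u110 x =
      -Real.cos (((K : ℝ) - 1) * x) / (c₀ - ((K : ℝ) - 1) ^ 2 + β * ((K : ℝ) - 1) ^ 4)
      - Real.cos (((K : ℝ) + 1) * x) / (c₀ - ((K : ℝ) + 1) ^ 2 + β * ((K : ℝ) + 1) ^ 4))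
    (hu020 : ∀ x : ℝ, u020 x =
      -1 / (2 * c₀) - Real.cos (2 * (K : ℝ) * x)
        / (2 * (c₀ - 4 * (K : ℝ) ^ 2 + 16 * β * (K : ℝ) ^ 4)))
    (v300 v120 w210 w030 : ℝ)
    (hv300 : v300 = -(((K : ℝ) ^ 2 + 1) * (5 * (K : ℝ) ^ 2 - 24))
      / (6 * (K : ℝ) ^ 2 * ((K : ℝ) ^ 2 - 4)))
    (hv120 : v120 = -(((K : ℝ) ^ 2 + 1) * (4 * (K : ℝ) ^ 4 - 27 * (K : ℝ) ^ 2 + 4))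
      / ((K : ℝ) ^ 2 * ((K : ℝ) ^ 2 - 4) * (4 * (K : ℝ) ^ 2 - 1)))
    (hw210 : w210 = v120)
    (hw030 : w030 = -(((K : ℝ) ^ 2 + 1) * (24 * (K : ℝ) ^ 2 - 5))
      / (6 * (K : ℝ) ^ 2 * (4 * (K : ℝ) ^ 2 - 1))) :
    ∀ a b : ℝ,
      (1 / Real.pi) * (∫ x in (-Real.pi)..Real.pi,
          2 * (a * Real.cos x + b * Real.cos ((K : ℝ) * x))
            * (a ^ 2 * u200 x + a * b * u110 x + b ^ 2 * u020 x) * Real.cos x)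
        = v300 * a ^ 3 + v120 * a * b ^ 2 ∧
      (1 / Real.pi) * (∫ x in (-Real.pi)..Real.pi,
          2 * (a * Real.cos x + b * Real.cos ((K : ℝ) * x))
            * (a ^ 2 * u200 x + a * b * u110 x + b ^ 2 * u020 x) * Real.cos ((K : ℝ) * x))
        = w210 * a ^ 2 * b + w030 * b ^ 3 := by
  intro a b
  subst hw210 hv300 hv120 hw030 hc₀ hβ
  -- basic integral values
  have tD11 : (∫ x in (-π)..π, Real.cos (1 * x) * Real.cos (1 * x)) = (0 + 2 * π) / 2 :=
    J2 1 1 0 (2 * π) (cosnx_int _ 2 (by norm_num) (by norm_num)) (cosnx_zero _ (by norm_num))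
  have tDK1 : (∫ x in (-π)..π, Real.cos ((K : ℝ) * x) * Real.cos (1 * x)) = (0 + 0) / 2 :=
    J2 _ 1 0 0 (cosnx_int _ ((K : ℤ) + 1) (by push_cast; ring) (by omega))
      (cosnx_int _ ((K : ℤ) - 1) (by push_cast; ring) (by omega))
  have tDKK : (∫ x in (-π)..π, Real.cos ((K : ℝ) * x) * Real.cos ((K : ℝ) * x)) = (0 + 2 * π) / 2 :=
    J2 _ _ 0 (2 * π) (cosnx_int _ (2 * (K : ℤ)) (by push_cast; ring) (by omega))
      (cosnx_zero _ (by ring))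
  have t211 : (∫ x in (-π)..π, Real.cos (2 * x) * Real.cos (1 * x) * Real.cos (1 * x))
      = (0 + 0 + 0 + 2 * π) / 4 :=
    J3 2 1 1 0 0 0 (2 * π) (cosnx_int _ 4 (by norm_num) (by norm_num))
      (cosnx_int _ 2 (by norm_num) (by norm_num)) (cosnx_int _ 2 (by norm_num) (by norm_num))
      (cosnx_zero _ (by norm_num))
  have tA11 : (∫ x in (-π)..π, Real.cos (((K : ℝ) - 1) * x) * Real.cos (1 * x) * Real.cos (1 * x))
      = (0 + 0 + 0 + 0) / 4 :=
    J3 _ 1 1 0 0 0 0 (cosnx_int _ ((K : ℤ) + 1) (by push_cast; ring) (by omega))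
      (cosnx_int _ ((K : ℤ) - 1) (by push_cast; ring) (by omega))
      (cosnx_int _ ((K : ℤ) - 1) (by push_cast; ring) (by omega))
      (cosnx_int _ ((K : ℤ) - 3) (by push_cast; ring) (by omega))
  have tB11 : (∫ x in (-π)..π, Real.cos (((K : ℝ) + 1) * x) * Real.cos (1 * x) * Real.cos (1 * x))
      = (0 + 0 + 0 + 0) / 4 :=
    J3 _ 1 1 0 0 0 0 (cosnx_int _ ((K : ℤ) + 3) (by push_cast; ring) (by omega))
      (cosnx_int _ ((K : ℤ) + 1) (by push_cast; ring) (by omega))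
      (cosnx_int _ ((K : ℤ) + 1) (by push_cast; ring) (by omega))
      (cosnx_int _ ((K : ℤ) - 1) (by push_cast; ring) (by omega))
  have tE11 : (∫ x in (-π)..π, Real.cos (2 * (K : ℝ) * x) * Real.cos (1 * x) * Real.cos (1 * x))
      = (0 + 0 + 0 + 0) / 4 :=
    J3 _ 1 1 0 0 0 0 (cosnx_int _ (2 * (K : ℤ) + 2) (by push_cast; ring) (by omega))
      (cosnx_int _ (2 * (K : ℤ)) (by push_cast; ring) (by omega))
      (cosnx_int _ (2 * (K : ℤ)) (by push_cast; ring) (by omega))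
      (cosnx_int _ (2 * (K : ℤ) - 2) (by push_cast; ring) (by omega))
  have tK21 : (∫ x in (-π)..π, Real.cos ((K : ℝ) * x) * Real.cos (2 * x) * Real.cos (1 * x))
      = (0 + 0 + 0 + 0) / 4 :=
    J3 _ 2 1 0 0 0 0 (cosnx_int _ ((K : ℤ) + 3) (by push_cast; ring) (by omega))
      (cosnx_int _ ((K : ℤ) + 1) (by push_cast; ring) (by omega))
      (cosnx_int _ ((K : ℤ) - 1) (by push_cast; ring) (by omega))
      (cosnx_int _ ((K : ℤ) - 3) (by push_cast; ring) (by omega))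
  have tKA1 : (∫ x in (-π)..π,
        Real.cos ((K : ℝ) * x) * Real.cos (((K : ℝ) - 1) * x) * Real.cos (1 * x))
      = (0 + 0 + 0 + 2 * π) / 4 :=
    J3 _ _ 1 0 0 0 (2 * π) (cosnx_int _ (2 * (K : ℤ)) (by push_cast; ring) (by omega))
      (cosnx_int _ (2 * (K : ℤ) - 2) (by push_cast; ring) (by omega))
      (cosnx_int _ 2 (by push_cast; ring) (by norm_num))
      (cosnx_zero _ (by ring))
  have tBK1 : (∫ x in (-π)..π,
        Real.cos (((K : ℝ) + 1) * x) * Real.cos ((K : ℝ) * x) * Real.cos (1 * x))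
      = (0 + 0 + 0 + 2 * π) / 4 :=
    J3 _ _ 1 0 0 0 (2 * π) (cosnx_int _ (2 * (K : ℤ) + 2) (by push_cast; ring) (by omega))
      (cosnx_int _ (2 * (K : ℤ)) (by push_cast; ring) (by omega))
      (cosnx_int _ 2 (by push_cast; ring) (by norm_num))
      (cosnx_zero _ (by ring))
  have tEK1 : (∫ x in (-π)..π,
        Real.cos (2 * (K : ℝ) * x) * Real.cos ((K : ℝ) * x) * Real.cos (1 * x))
      = (0 + 0 + 0 + 0) / 4 :=
    J3 _ _ 1 0 0 0 0 (cosnx_int _ (3 * (K : ℤ) + 1) (by push_cast; ring) (by omega))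
      (cosnx_int _ (3 * (K : ℤ) - 1) (by push_cast; ring) (by omega))
      (cosnx_int _ ((K : ℤ) + 1) (by push_cast; ring) (by omega))
      (cosnx_int _ ((K : ℤ) - 1) (by push_cast; ring) (by omega))
  have t21K : (∫ x in (-π)..π, Real.cos (2 * x) * Real.cos (1 * x) * Real.cos ((K : ℝ) * x))
      = (0 + 0 + 0 + 0) / 4 :=
    J3 2 1 _ 0 0 0 0 (cosnx_int _ ((K : ℤ) + 3) (by push_cast; ring) (by omega))
      (cosnx_int _ (3 - (K : ℤ)) (by push_cast; ring) (by omega))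
      (cosnx_int _ ((K : ℤ) + 1) (by push_cast; ring) (by omega))
      (cosnx_int _ (1 - (K : ℤ)) (by push_cast; ring) (by omega))
  have tE1K : (∫ x in (-π)..π,
        Real.cos (2 * (K : ℝ) * x) * Real.cos (1 * x) * Real.cos ((K : ℝ) * x))
      = (0 + 0 + 0 + 0) / 4 :=
    J3 _ 1 _ 0 0 0 0 (cosnx_int _ (3 * (K : ℤ) + 1) (by push_cast; ring) (by omega))
      (cosnx_int _ ((K : ℤ) + 1) (by push_cast; ring) (by omega))
      (cosnx_int _ (3 * (K : ℤ) - 1) (by push_cast; ring) (by omega))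
      (cosnx_int _ ((K : ℤ) - 1) (by push_cast; ring) (by omega))
  have t2KK : (∫ x in (-π)..π,
        Real.cos (2 * x) * Real.cos ((K : ℝ) * x) * Real.cos ((K : ℝ) * x))
      = (0 + 0 + 0 + 0) / 4 :=
    J3 2 _ _ 0 0 0 0 (cosnx_int _ (2 * (K : ℤ) + 2) (by push_cast; ring) (by omega))
      (cosnx_int _ 2 (by push_cast; ring) (by norm_num))
      (cosnx_int _ 2 (by push_cast; ring) (by norm_num))
      (cosnx_int _ (2 - 2 * (K : ℤ)) (by push_cast; ring) (by omega))
  have tAKK : (∫ x in (-π)..π,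
        Real.cos (((K : ℝ) - 1) * x) * Real.cos ((K : ℝ) * x) * Real.cos ((K : ℝ) * x))
      = (0 + 0 + 0 + 0) / 4 :=
    J3 _ _ _ 0 0 0 0 (cosnx_int _ (3 * (K : ℤ) - 1) (by push_cast; ring) (by omega))
      (cosnx_int _ ((K : ℤ) - 1) (by push_cast; ring) (by omega))
      (cosnx_int _ ((K : ℤ) - 1) (by push_cast; ring) (by omega))
      (cosnx_int _ (-(K : ℤ) - 1) (by push_cast; ring) (by omega))
  have tBKK : (∫ x in (-π)..π,
        Real.cos (((K : ℝ) + 1) * x) * Real.cos ((K : ℝ) * x) * Real.cos ((K : ℝ) * x))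
      = (0 + 0 + 0 + 0) / 4 :=
    J3 _ _ _ 0 0 0 0 (cosnx_int _ (3 * (K : ℤ) + 1) (by push_cast; ring) (by omega))
      (cosnx_int _ ((K : ℤ) + 1) (by push_cast; ring) (by omega))
      (cosnx_int _ ((K : ℤ) + 1) (by push_cast; ring) (by omega))
      (cosnx_int _ (1 - (K : ℤ)) (by push_cast; ring) (by omega))
  have tEKK : (∫ x in (-π)..π,
        Real.cos (2 * (K : ℝ) * x) * Real.cos ((K : ℝ) * x) * Real.cos ((K : ℝ) * x))
      = (0 + 0 + 0 + 2 * π) / 4 :=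
    J3 _ _ _ 0 0 0 (2 * π) (cosnx_int _ (4 * (K : ℤ)) (by push_cast; ring) (by omega))
      (cosnx_int _ (2 * (K : ℤ)) (by push_cast; ring) (by omega))
      (cosnx_int _ (2 * (K : ℤ)) (by push_cast; ring) (by omega))
      (cosnx_zero _ (by ring))
  -- nonvanishing denominators
  have hk1 : (0:ℝ) < 1 + (K : ℝ) ^ 2 := by positivity
  have hk4 : (4:ℝ) ≤ (K : ℝ) := by exact_mod_cast hK
  have h16 : (16:ℝ) ≤ (K : ℝ) ^ 2 := by nlinarith
  have hk1ne : (1 + (K : ℝ) ^ 2) ≠ 0 := ne_of_gt hk1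
  have hc₀eq : 1 - 1 / (1 + (K : ℝ) ^ 2) = (K : ℝ) ^ 2 / (1 + (K : ℝ) ^ 2) := by
    field_simp
    ring
  have hD2eq : 1 - 1 / (1 + (K : ℝ) ^ 2) - 4 + 16 * (1 / (1 + (K : ℝ) ^ 2))
      = -(3 * ((K : ℝ) ^ 2 - 4)) / (1 + (K : ℝ) ^ 2) := by
    field_simp; ring
  have hAeq : 1 - 1 / (1 + (K : ℝ) ^ 2) - ((K : ℝ) - 1) ^ 2
      + 1 / (1 + (K : ℝ) ^ 2) * ((K : ℝ) - 1) ^ 4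
      = -((K : ℝ) * (2 * (K : ℝ) - 1) * ((K : ℝ) - 2)) / (1 + (K : ℝ) ^ 2) := by
    field_simp; ring
  have hBeq : 1 - 1 / (1 + (K : ℝ) ^ 2) - ((K : ℝ) + 1) ^ 2
      + 1 / (1 + (K : ℝ) ^ 2) * ((K : ℝ) + 1) ^ 4
      = ((K : ℝ) * (2 * (K : ℝ) + 1) * ((K : ℝ) + 2)) / (1 + (K : ℝ) ^ 2) := by
    field_simp; ring
  have hDKeq : 1 - 1 / (1 + (K : ℝ) ^ 2) - 4 * (K : ℝ) ^ 2
      + 16 * (1 / (1 + (K : ℝ) ^ 2)) * (K : ℝ) ^ 4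
      = 3 * (K : ℝ) ^ 2 * (4 * (K : ℝ) ^ 2 - 1) / (1 + (K : ℝ) ^ 2) := by
    field_simp; ring
  have hKne : (K : ℝ) ≠ 0 := by nlinarith
  have hK24 : (K : ℝ) ^ 2 - 4 ≠ 0 := by nlinarith
  have hK41 : 4 * (K : ℝ) ^ 2 - 1 ≠ 0 := by nlinarith
  have hKm2 : (K : ℝ) - 2 ≠ 0 := by nlinarith
  have hKp2 : (K : ℝ) + 2 ≠ 0 := by nlinarith
  have h2Km1 : 2 * (K : ℝ) - 1 ≠ 0 := by nlinarith
  have h2Kp1 : 2 * (K : ℝ) + 1 ≠ 0 := by nlinarith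
  have hπ : (π : ℝ) ≠ 0 := Real.pi_ne_zero
  have h300 : 2 * (-1 / (2 * (1 - 1 / (1 + (K : ℝ) ^ 2))))
      + (-1 / (2 * (1 - 1 / (1 + (K : ℝ) ^ 2) - 4 + 16 * (1 / (1 + (K : ℝ) ^ 2)))))
      = -(((K : ℝ) ^ 2 + 1) * (5 * (K : ℝ) ^ 2 - 24))
        / (6 * (K : ℝ) ^ 2 * ((K : ℝ) ^ 2 - 4)) := by
    rw [hD2eq, hc₀eq]
    field_simp
    ring
  have h120 : 2 * (-1 / (2 * (1 - 1 / (1 + (K : ℝ) ^ 2))))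
      + (-1 / (1 - 1 / (1 + (K : ℝ) ^ 2) - ((K : ℝ) - 1) ^ 2
          + 1 / (1 + (K : ℝ) ^ 2) * ((K : ℝ) - 1) ^ 4))
      + (-1 / (1 - 1 / (1 + (K : ℝ) ^ 2) - ((K : ℝ) + 1) ^ 2
          + 1 / (1 + (K : ℝ) ^ 2) * ((K : ℝ) + 1) ^ 4))
      = -(((K : ℝ) ^ 2 + 1) * (4 * (K : ℝ) ^ 4 - 27 * (K : ℝ) ^ 2 + 4))
        / ((K : ℝ) ^ 2 * ((K : ℝ) ^ 2 - 4) * (4 * (K : ℝ) ^ 2 - 1)) := by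
    rw [hAeq, hBeq, hc₀eq]
    have e1 : (K : ℝ) ^ 2 - 4 = ((K : ℝ) - 2) * ((K : ℝ) + 2) := by ring
    have e2 : 4 * (K : ℝ) ^ 2 - 1 = (2 * (K : ℝ) - 1) * (2 * (K : ℝ) + 1) := by ring
    rw [e1, e2]
    field_simp
    ring
  have h030 : 2 * (-1 / (2 * (1 - 1 / (1 + (K : ℝ) ^ 2))))
      + (-1 / (2 * (1 - 1 / (1 + (K : ℝ) ^ 2) - 4 * (K : ℝ) ^ 2
          + 16 * (1 / (1 + (K : ℝ) ^ 2)) * (K : ℝ) ^ 4)))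
      = -(((K : ℝ) ^ 2 + 1) * (24 * (K : ℝ) ^ 2 - 5))
        / (6 * (K : ℝ) ^ 2 * (4 * (K : ℝ) ^ 2 - 1)) := by
    rw [hDKeq, hc₀eq]
    have e2 : 4 * (K : ℝ) ^ 2 - 1 = (2 * (K : ℝ) - 1) * (2 * (K : ℝ) + 1) := by ring
    rw [e2]
    field_simp
    ring
  constructor
  · have hint1 : (∫ x in (-π)..π,
        2 * (a * Real.cos x + b * Real.cos ((K : ℝ) * x))
          * (a ^ 2 * u200 x + a * b * u110 x + b ^ 2 * u020 x) * Real.cos x)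
        = ∫ x in (-π)..π,
        (2 * (a ^ 3 + a * b ^ 2) * (-1 / (2 * (1 - 1 / (1 + (K : ℝ) ^ 2))))
            * (Real.cos (1 * x) * Real.cos (1 * x))
        + 2 * a ^ 3 * (-1 / (2 * (1 - 1 / (1 + (K : ℝ) ^ 2) - 4 + 16 * (1 / (1 + (K : ℝ) ^ 2)))))
            * (Real.cos (2 * x) * Real.cos (1 * x) * Real.cos (1 * x))
        + 2 * a ^ 2 * b * (-1 / (1 - 1 / (1 + (K : ℝ) ^ 2) - ((K : ℝ) - 1) ^ 2
              + 1 / (1 + (K : ℝ) ^ 2) * ((K : ℝ) - 1) ^ 4))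
            * (Real.cos (((K : ℝ) - 1) * x) * Real.cos (1 * x) * Real.cos (1 * x))
        + 2 * a ^ 2 * b * (-1 / (1 - 1 / (1 + (K : ℝ) ^ 2) - ((K : ℝ) + 1) ^ 2
              + 1 / (1 + (K : ℝ) ^ 2) * ((K : ℝ) + 1) ^ 4))
            * (Real.cos (((K : ℝ) + 1) * x) * Real.cos (1 * x) * Real.cos (1 * x))
        + 2 * a * b ^ 2 * (-1 / (2 * (1 - 1 / (1 + (K : ℝ) ^ 2) - 4 * (K : ℝ) ^ 2
              + 16 * (1 / (1 + (K : ℝ) ^ 2)) * (K : ℝ) ^ 4)))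
            * (Real.cos (2 * (K : ℝ) * x) * Real.cos (1 * x) * Real.cos (1 * x))
        + 2 * (a ^ 2 * b + b ^ 3) * (-1 / (2 * (1 - 1 / (1 + (K : ℝ) ^ 2))))
            * (Real.cos ((K : ℝ) * x) * Real.cos (1 * x))
        + 2 * a ^ 2 * b * (-1 / (2 * (1 - 1 / (1 + (K : ℝ) ^ 2) - 4 + 16 * (1 / (1 + (K : ℝ) ^ 2)))))
            * (Real.cos ((K : ℝ) * x) * Real.cos (2 * x) * Real.cos (1 * x))
        + 2 * a * b ^ 2 * (-1 / (1 - 1 / (1 + (K : ℝ) ^ 2) - ((K : ℝ) - 1) ^ 2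
              + 1 / (1 + (K : ℝ) ^ 2) * ((K : ℝ) - 1) ^ 4))
            * (Real.cos ((K : ℝ) * x) * Real.cos (((K : ℝ) - 1) * x) * Real.cos (1 * x))
        + 2 * a * b ^ 2 * (-1 / (1 - 1 / (1 + (K : ℝ) ^ 2) - ((K : ℝ) + 1) ^ 2
              + 1 / (1 + (K : ℝ) ^ 2) * ((K : ℝ) + 1) ^ 4))
            * (Real.cos (((K : ℝ) + 1) * x) * Real.cos ((K : ℝ) * x) * Real.cos (1 * x))
        + 2 * b ^ 3 * (-1 / (2 * (1 - 1 / (1 + (K : ℝ) ^ 2) - 4 * (K : ℝ) ^ 2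
              + 16 * (1 / (1 + (K : ℝ) ^ 2)) * (K : ℝ) ^ 4)))
            * (Real.cos (2 * (K : ℝ) * x) * Real.cos ((K : ℝ) * x) * Real.cos (1 * x))) := by
      apply integral_congr
      intro x _
      simp only [hu200, hu110, hu020, one_mul]
      ring
    rw [hint1]
    rw [integral_add, integral_add, integral_add, integral_add, integral_add,
      integral_add, integral_add, integral_add, integral_add]
    · simp only [integral_const_mul]
      rw [tD11, t211, tA11, tB11, tE11, tDK1, tK21, tKA1, tBK1, tEK1]
      rw [one_div, inv_mul_eq_div, div_eq_iff hπ]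
      linear_combination a ^ 3 * π * h300 + a * b ^ 2 * π * h120
    all_goals apply Continuous.intervalIntegrable
    all_goals fun_prop
  · have hint2 : (∫ x in (-π)..π,
        2 * (a * Real.cos x + b * Real.cos ((K : ℝ) * x))
          * (a ^ 2 * u200 x + a * b * u110 x + b ^ 2 * u020 x) * Real.cos ((K : ℝ) * x))
        = ∫ x in (-π)..π,
        (2 * (a ^ 3 + a * b ^ 2) * (-1 / (2 * (1 - 1 / (1 + (K : ℝ) ^ 2))))
            * (Real.cos ((K : ℝ) * x) * Real.cos (1 * x))
        + 2 * a ^ 3 * (-1 / (2 * (1 - 1 / (1 + (K : ℝ) ^ 2) - 4 + 16 * (1 / (1 + (K : ℝ) ^ 2)))))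
            * (Real.cos (2 * x) * Real.cos (1 * x) * Real.cos ((K : ℝ) * x))
        + 2 * a ^ 2 * b * (-1 / (1 - 1 / (1 + (K : ℝ) ^ 2) - ((K : ℝ) - 1) ^ 2
              + 1 / (1 + (K : ℝ) ^ 2) * ((K : ℝ) - 1) ^ 4))
            * (Real.cos ((K : ℝ) * x) * Real.cos (((K : ℝ) - 1) * x) * Real.cos (1 * x))
        + 2 * a ^ 2 * b * (-1 / (1 - 1 / (1 + (K : ℝ) ^ 2) - ((K : ℝ) + 1) ^ 2
              + 1 / (1 + (K : ℝ) ^ 2) * ((K : ℝ) + 1) ^ 4))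
            * (Real.cos (((K : ℝ) + 1) * x) * Real.cos ((K : ℝ) * x) * Real.cos (1 * x))
        + 2 * a * b ^ 2 * (-1 / (2 * (1 - 1 / (1 + (K : ℝ) ^ 2) - 4 * (K : ℝ) ^ 2
              + 16 * (1 / (1 + (K : ℝ) ^ 2)) * (K : ℝ) ^ 4)))
            * (Real.cos (2 * (K : ℝ) * x) * Real.cos (1 * x) * Real.cos ((K : ℝ) * x))
        + 2 * (a ^ 2 * b + b ^ 3) * (-1 / (2 * (1 - 1 / (1 + (K : ℝ) ^ 2))))
            * (Real.cos ((K : ℝ) * x) * Real.cos ((K : ℝ) * x))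
        + 2 * a ^ 2 * b * (-1 / (2 * (1 - 1 / (1 + (K : ℝ) ^ 2) - 4 + 16 * (1 / (1 + (K : ℝ) ^ 2)))))
            * (Real.cos (2 * x) * Real.cos ((K : ℝ) * x) * Real.cos ((K : ℝ) * x))
        + 2 * a * b ^ 2 * (-1 / (1 - 1 / (1 + (K : ℝ) ^ 2) - ((K : ℝ) - 1) ^ 2
              + 1 / (1 + (K : ℝ) ^ 2) * ((K : ℝ) - 1) ^ 4))
            * (Real.cos (((K : ℝ) - 1) * x) * Real.cos ((K : ℝ) * x) * Real.cos ((K : ℝ) * x))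
        + 2 * a * b ^ 2 * (-1 / (1 - 1 / (1 + (K : ℝ) ^ 2) - ((K : ℝ) + 1) ^ 2
              + 1 / (1 + (K : ℝ) ^ 2) * ((K : ℝ) + 1) ^ 4))
            * (Real.cos (((K : ℝ) + 1) * x) * Real.cos ((K : ℝ) * x) * Real.cos ((K : ℝ) * x))
        + 2 * b ^ 3 * (-1 / (2 * (1 - 1 / (1 + (K : ℝ) ^ 2) - 4 * (K : ℝ) ^ 2
              + 16 * (1 / (1 + (K : ℝ) ^ 2)) * (K : ℝ) ^ 4)))
            * (Real.cos (2 * (K : ℝ) * x) * Real.cos ((K : ℝ) * x) * Real.cos ((K : ℝ) * x))) := by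
      apply integral_congr
      intro x _
      simp only [hu200, hu110, hu020, one_mul]
      ring
    rw [hint2]
    rw [integral_add, integral_add, integral_add, integral_add, integral_add,
      integral_add, integral_add, integral_add, integral_add]
    · simp only [integral_const_mul]
      rw [tDK1, t21K, tKA1, tBK1, tE1K, tDKK, t2KK, tAKK, tBKK, tEKK]
      rw [one_div, inv_mul_eq_div, div_eq_iff hπ]
      linear_combination a ^ 2 * b * π * h120 + b ^ 3 * π * h030
    all_goals apply Continuous.intervalIntegrable
    all_goals fun_prop
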